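/- Let Σ ∈ ℝ^{d×d} be positive definite and μ ∈ ℝ^d, s > 0, b ∈ ℝ with b ≠ 0. Define g(x) = μ'x + s·‖Σx‖₂. If x₁ ≠ x₂ are two points with g(x₁) = g(x₂) = b, then for every θ ∈ (0,1) the point x_θ = θx₁ + (1−θ)x₂ satisfies g(x_θ) < b. -/

import Mathlib

open Matrix

/-- For `g(x) = μ'x + s‖Σx‖₂` with `Σ` positive definite, `s > 0` and `b ≠ 0`, the
level set `{g = b}` contains no segments: midpoints of two distinct points on the
level set lie strictly below `b`. -/
theorem ellipsoidal_constraint_strictly_convex_boundary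
    {d : ℕ} (A : Matrix (Fin d) (Fin d) ℝ) (hA : A.PosDef)
    (μ : Fin d → ℝ) (s : ℝ) (hs : 0 < s) (b : ℝ) (hb : b ≠ 0)
    (x₁ x₂ : Fin d → ℝ) (hne : x₁ ≠ x₂)
    (h₁ : ∑ i, μ i * x₁ i + s * Real.sqrt (∑ i, (A.mulVec x₁ i) ^ 2) = b)
    (h₂ : ∑ i, μ i * x₂ i + s * Real.sqrt (∑ i, (A.mulVec x₂ i) ^ 2) = b) :
    ∀ θ : ℝ, θ ∈ Set.Ioo (0 : ℝ) 1 →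
      ∑ i, μ i * (θ • x₁ + (1 - θ) • x₂) i
        + s * Real.sqrt (∑ i, (A.mulVec (θ • x₁ + (1 - θ) • x₂) i) ^ 2) < b := by
  intro θ hθ
  obtain ⟨hθ0, hθ1⟩ := hθ
  have h1θ : 0 < 1 - θ := by linarith
  -- norms in Euclidean space
  have hnorm : ∀ v : Fin d → ℝ,
      Real.sqrt (∑ i, v i ^ 2) = ‖(WithLp.equiv 2 (Fin d → ℝ)).symm v‖ := by
    intro v
    rw [EuclideanSpace.norm_eq]
    congr 1
    refine Finset.sum_congr rfl fun i _ => ?_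
    simp [sq_abs]
  -- injectivity of mulVec for positive definite A
  have hinj : ∀ v : Fin d → ℝ, A.mulVec v = 0 → v = 0 := by
    intro v hv
    by_contra h
    have := hA.dotProduct_mulVec_pos h
    rw [hv] at this
    simp at this
  set u₁ : EuclideanSpace ℝ (Fin d) := (WithLp.equiv 2 (Fin d → ℝ)).symm (A.mulVec x₁) with hu₁
  set u₂ : EuclideanSpace ℝ (Fin d) := (WithLp.equiv 2 (Fin d → ℝ)).symm (A.mulVec x₂) with hu₂
  have hmul : A.mulVec (θ • x₁ + (1 - θ) • x₂) = θ • A.mulVec x₁ + (1 - θ) • A.mulVec x₂ := by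
    rw [Matrix.mulVec_add, Matrix.mulVec_smul, Matrix.mulVec_smul]
  have huθ : (WithLp.equiv 2 (Fin d → ℝ)).symm (A.mulVec (θ • x₁ + (1 - θ) • x₂))
      = θ • u₁ + (1 - θ) • u₂ := by
    rw [hmul]
    rfl
  have hlin : ∑ i, μ i * (θ • x₁ + (1 - θ) • x₂) i
      = θ * (∑ i, μ i * x₁ i) + (1 - θ) * (∑ i, μ i * x₂ i) := by
    rw [Finset.mul_sum, Finset.mul_sum, ← Finset.sum_add_distrib]
    refine Finset.sum_congr rfl fun i _ => ?_
    simp [Pi.add_apply, Pi.smul_apply, smul_eq_mul]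
    ring
  rw [hlin, hnorm, huθ]
  rw [hnorm] at h₁ h₂
  rw [← hu₁] at h₁
  rw [← hu₂] at h₂
  -- strict triangle inequality
  have hstrict : ‖θ • u₁ + (1 - θ) • u₂‖ < θ * ‖u₁‖ + (1 - θ) * ‖u₂‖ := by
    have hle : ‖θ • u₁ + (1 - θ) • u₂‖ ≤ θ * ‖u₁‖ + (1 - θ) * ‖u₂‖ := by
      calc ‖θ • u₁ + (1 - θ) • u₂‖ ≤ ‖θ • u₁‖ + ‖(1 - θ) • u₂‖ := norm_add_le _ _
        _ = θ * ‖u₁‖ + (1 - θ) * ‖u₂‖ := by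
          rw [norm_smul, norm_smul, Real.norm_eq_abs, Real.norm_eq_abs,
            abs_of_pos hθ0, abs_of_pos h1θ]
    rcases hle.lt_or_eq with h | h
    · exact h
    · exfalso
      have heq : ‖θ • u₁ + (1 - θ) • u₂‖ = ‖θ • u₁‖ + ‖(1 - θ) • u₂‖ := by
        rw [h, norm_smul, norm_smul, Real.norm_eq_abs, Real.norm_eq_abs,
          abs_of_pos hθ0, abs_of_pos h1θ]
      have hsr : SameRay ℝ (θ • u₁) ((1 - θ) • u₂) := sameRay_iff_norm_add.mpr heq
      have hx1zero : u₁ ≠ 0 := by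
        intro h0
        have : A.mulVec x₁ = 0 := by
          have := congrArg (WithLp.equiv 2 (Fin d → ℝ)) h0
          simpa [hu₁] using this
        have hx0 : x₁ = 0 := hinj _ this
        rw [hx0] at h₁
        simp at h₁
        rw [h0, norm_zero, mul_zero] at h₁
        exact hb h₁.symm
      have hx2zero : u₂ ≠ 0 := by
        intro h0
        have : A.mulVec x₂ = 0 := by
          have := congrArg (WithLp.equiv 2 (Fin d → ℝ)) h0
          simpa [hu₂] using this
        have hx0 : x₂ = 0 := hinj _ this
        rw [hx0] at h₂
        simp at h₂
        rw [h0, norm_zero, mul_zero] at h₂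
        exact hb h₂.symm
      rcases hsr with h0 | h0 | ⟨r₁, r₂, hr₁, hr₂, hr⟩
      · exact hx1zero (by simpa [smul_eq_zero, hθ0.ne'] using h0)
      · exact hx2zero (by simpa [smul_eq_zero, h1θ.ne'] using h0)
      · -- r₁ • θ • u₁ = r₂ • (1-θ) • u₂
        have hr' : (r₁ * θ) • u₁ = (r₂ * (1 - θ)) • u₂ := by
          simpa [smul_smul] using hr
        set c₁ := r₁ * θ with hc₁
        set c₂ := r₂ * (1 - θ) with hc₂
        have hc₁pos : 0 < c₁ := mul_pos hr₁ hθ0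
        have hc₂pos : 0 < c₂ := mul_pos hr₂ h1θ
        -- back to vectors: c₁ • x₁ = c₂ • x₂
        have hvec : A.mulVec (c₁ • x₁ - c₂ • x₂) = 0 := by
          have : c₁ • A.mulVec x₁ = c₂ • A.mulVec x₂ := by
            have := congrArg (WithLp.equiv 2 (Fin d → ℝ)) hr'
            simpa [hu₁, hu₂] using this
          rw [Matrix.mulVec_sub, Matrix.mulVec_smul, Matrix.mulVec_smul, this, sub_self]
        have hx : c₁ • x₁ = c₂ • x₂ := by
          have := hinj _ hvec
          have := sub_eq_zero.mp this
          exact this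
        set c := c₂ / c₁ with hc
        have hcpos : 0 < c := div_pos hc₂pos hc₁pos
        have hx1eq : x₁ = c • x₂ := by
          have h' : x₁ = c₁⁻¹ • (c₁ • x₁) := by
            rw [smul_smul, inv_mul_cancel₀ hc₁pos.ne', one_smul]
          rw [h', hx, smul_smul, hc, div_eq_inv_mul]
        -- compute g(x₁) = c * g(x₂)
        have hLin1 : ∑ i, μ i * x₁ i = c * ∑ i, μ i * x₂ i := by
          rw [hx1eq, Finset.mul_sum]
          refine Finset.sum_congr rfl fun i _ => ?_
          simp [Pi.smul_apply, smul_eq_mul]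
          ring
        have hN1 : ‖u₁‖ = c * ‖u₂‖ := by
          have : u₁ = c • u₂ := by
            rw [hu₁, hu₂, hx1eq, Matrix.mulVec_smul]
            rfl
          rw [this, norm_smul, Real.norm_eq_abs, abs_of_pos hcpos]
        rw [hLin1, hN1] at h₁
        have hcb : c * b = b := by
          linear_combination h₁ - c * h₂
        have hc1 : c = 1 := by
          have : (c - 1) * b = 0 := by linarith [hcb]
          rcases mul_eq_zero.mp this with h | h
          · linarith
          · exact absurd h hb
        apply hne
        rw [hx1eq, hc1, one_smul]
  nlinarith [hstrict, h₁, h₂]
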